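/- For all k,ℓ ∈ ℤ, the integer max(|2k+1|, 2|k+ℓ+1| − 1, |2ℓ+1|) (which is the value of the first integral V of the α = 2π/3 map at the hexagon center p_{k,ℓ} = (2k+ℓ+3/2, √3(ℓ+1/2))) is odd; and for every odd natural number c, the set {(k,ℓ) ∈ ℤ² : max(|2k+1|, 2|k+ℓ+1| − 1, |2ℓ+1|) = c} has exactly 3c+1 elements. -/

import Mathlib

open Finset

/-- The hexagonal region `{(k,ℓ) : V(k,ℓ) ≤ 2n+1}` as a finset. -/
noncomputable def hexF (n : ℕ) : Finset (ℤ × ℤ) :=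
  ((Finset.Icc (-(n:ℤ)-1) n) ×ˢ (Finset.Icc (-(n:ℤ)-1) n)).filter
    (fun p => -(n:ℤ)-2 ≤ p.1 + p.2 ∧ p.1 + p.2 ≤ n)

lemma mem_hexF (n : ℕ) (p : ℤ × ℤ) :
    p ∈ hexF n ↔
      max (max (|2 * p.1 + 1|) (2 * |p.1 + p.2 + 1| - 1)) (|2 * p.2 + 1|) ≤ 2 * n + 1 := by
  simp only [hexF, Finset.mem_filter, Finset.mem_product, Finset.mem_Icc, max_le_iff]
  rcases abs_cases (2 * p.1 + 1) with ⟨h1, _⟩ | ⟨h1, _⟩ <;>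
    rcases abs_cases (p.1 + p.2 + 1) with ⟨h2, _⟩ | ⟨h2, _⟩ <;>
      rcases abs_cases (2 * p.2 + 1) with ⟨h3, _⟩ | ⟨h3, _⟩ <;>
        constructor <;> intro h <;> omega

/-- The `i`-th column of the hexagonal region. -/
noncomputable def colF (n i : ℕ) : Finset (ℤ × ℤ) :=
  ({((i:ℤ) - n - 1)} : Finset ℤ) ×ˢ
    Finset.Icc (max (-(n:ℤ)-1) (-1-(i:ℤ))) (min (n:ℤ) (2*n+1-(i:ℤ)))

lemma hexF_eq_biUnion (n : ℕ) :
    hexF n = (Finset.range (2*n+2)).biUnion (colF n) := by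
  ext ⟨k, l⟩
  simp only [hexF, colF, Finset.mem_filter, Finset.mem_product, Finset.mem_Icc,
    Finset.mem_biUnion, Finset.mem_range, Finset.mem_singleton, max_le_iff, le_min_iff]
  constructor
  · rintro ⟨⟨⟨hk1, hk2⟩, hl1, hl2⟩, hs1, hs2⟩
    exact ⟨(k + n + 1).toNat, by omega, by omega, by omega⟩
  · rintro ⟨i, hi, hk, ⟨h1, h2⟩, h3, h4⟩
    omega

lemma card_colF (n i : ℕ) :
    (colF n i).card =
      (min (n:ℤ) (2*n+1-(i:ℤ)) + 1 - max (-(n:ℤ)-1) (-1-(i:ℤ))).toNat := by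
  simp [colF, Int.card_Icc]

lemma card_hexF (n : ℕ) : (hexF n).card = (n+1) * (3*n+4) := by
  rw [hexF_eq_biUnion, Finset.card_biUnion]
  · have hcong : ∀ i ∈ Finset.range (2*n+2),
        (colF n i).card = if i ≤ n then n + 2 + i else 3*n + 3 - i := by
      intro i hi
      simp only [Finset.mem_range] at hi
      rw [card_colF]
      rcases max_cases (-(n:ℤ)-1) (-1-(i:ℤ)) with ⟨h1, h1'⟩ | ⟨h1, h1'⟩ <;>
        rcases min_cases ((n:ℤ)) (2*n+1-(i:ℤ)) with ⟨h2, h2'⟩ | ⟨h2, h2'⟩ <;>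
          rw [h1, h2] <;> split_ifs <;> omega
    rw [Finset.sum_congr rfl hcong]
    have hG : (∑ i ∈ Finset.range (n+1), i) * 2 = (n+1) * n :=
      Finset.sum_range_id_mul_two (n+1)
    have hsplit : (∑ i ∈ Finset.Ico 0 (n+1), if i ≤ n then n + 2 + i else 3*n + 3 - i)
        + (∑ i ∈ Finset.Ico (n+1) (2*n+2), if i ≤ n then n + 2 + i else 3*n + 3 - i)
        = ∑ i ∈ Finset.Ico 0 (2*n+2), if i ≤ n then n + 2 + i else 3*n + 3 - i :=
      Finset.sum_Ico_consecutive _ (by omega) (by omega)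
    rw [Finset.range_eq_Ico, ← hsplit]
    have e1 : (∑ i ∈ Finset.Ico 0 (n+1), if i ≤ n then n + 2 + i else 3*n + 3 - i)
        = ∑ i ∈ Finset.range (n+1), (n + 2 + i) := by
      rw [← Finset.range_eq_Ico]
      refine Finset.sum_congr rfl fun i hi => ?_
      simp only [Finset.mem_range] at hi
      rw [if_pos (by omega)]
    have e2 : (∑ i ∈ Finset.Ico (n+1) (2*n+2), if i ≤ n then n + 2 + i else 3*n + 3 - i)
        = ∑ i ∈ Finset.range (n+1), (n + 2 + i) := by
      rw [Finset.sum_Ico_eq_sum_range]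
      have : 2*n+2 - (n+1) = n+1 := by omega
      rw [this]
      rw [← Finset.sum_range_reflect (fun i => n + 2 + i) (n+1)]
      refine Finset.sum_congr rfl fun i hi => ?_
      simp only [Finset.mem_range] at hi
      rw [if_neg (by omega)]
      omega
    rw [e1, e2, Finset.sum_add_distrib, Finset.sum_const, Finset.card_range, smul_eq_mul]
    zify at hG ⊢
    linear_combination hG
  · intro i _ j _ hij
    rw [Function.onFun, Finset.disjoint_left]
    rintro ⟨a, b⟩ h1 h2
    simp only [colF, Finset.mem_product, Finset.mem_singleton] at h1 h2
    exact hij (by omega)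

lemma odd_V (k l : ℤ) :
    Odd (max (max (|2 * k + 1|) (2 * |k + l + 1| - 1)) (|2 * l + 1|)) := by
  rw [Int.odd_iff]
  rcases abs_cases (2 * k + 1) with ⟨h1, _⟩ | ⟨h1, _⟩ <;>
    rcases abs_cases (k + l + 1) with ⟨h2, _⟩ | ⟨h2, _⟩ <;>
      rcases abs_cases (2 * l + 1) with ⟨h3, _⟩ | ⟨h3, _⟩ <;>
        rcases max_cases (|2 * k + 1|) (2 * |k + l + 1| - 1) with ⟨h4, _⟩ | ⟨h4, _⟩ <;>
          rcases max_cases (max (|2 * k + 1|) (2 * |k + l + 1| - 1)) (|2 * l + 1|)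
            with ⟨h5, _⟩ | ⟨h5, _⟩ <;> omega

lemma one_le_V (k l : ℤ) :
    1 ≤ max (max (|2 * k + 1|) (2 * |k + l + 1| - 1)) (|2 * l + 1|) := by
  have h1 : (1:ℤ) ≤ |2 * k + 1| := by
    rcases abs_cases (2 * k + 1) with ⟨h, _⟩ | ⟨h, _⟩ <;> omega
  exact h1.trans ((le_max_left _ _).trans (le_max_left _ _))

/-- The value of the first integral of the `α = 2π/3` map at a hexagon center
`p_{k,ℓ}` is always odd, and each odd level `c` contains exactly `3c+1`
hexagon centers. -/
theorem hexagon_centers_two_pi_div_three :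
    (∀ k ℓ : ℤ, Odd (max (max (|2 * k + 1|) (2 * |k + ℓ + 1| - 1)) (|2 * ℓ + 1|))) ∧
    ∀ c : ℕ, Odd c →
      {p : ℤ × ℤ |
        max (max (|2 * p.1 + 1|) (2 * |p.1 + p.2 + 1| - 1)) (|2 * p.2 + 1|)
          = (c : ℤ)}.ncard = 3 * c + 1 := by
  refine ⟨odd_V, ?_⟩
  rintro c ⟨n, rfl⟩
  rcases n with _ | m
  · -- c = 1
    have hset : {p : ℤ × ℤ |
        max (max (|2 * p.1 + 1|) (2 * |p.1 + p.2 + 1| - 1)) (|2 * p.2 + 1|)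
          = ((2*0+1 : ℕ) : ℤ)} = ↑(hexF 0) := by
      ext p
      have h1 := one_le_V p.1 p.2
      simp only [Set.mem_setOf_eq, Finset.coe_sort_coe, Finset.mem_coe, mem_hexF]
      push_cast
      constructor <;> intro h <;> omega
    rw [hset, Set.ncard_coe_finset, card_hexF]
    norm_num
  · -- c = 2m+3
    have hsub : hexF m ⊆ hexF (m+1) := by
      intro p hp
      rw [mem_hexF] at hp ⊢
      push_cast at hp ⊢
      omega
    have hset : {p : ℤ × ℤ |
        max (max (|2 * p.1 + 1|) (2 * |p.1 + p.2 + 1| - 1)) (|2 * p.2 + 1|)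
          = ((2*(m+1)+1 : ℕ) : ℤ)} = ↑(hexF (m+1) \ hexF m) := by
      ext p
      have h1 := odd_V p.1 p.2
      rw [Int.odd_iff] at h1
      simp only [Set.mem_setOf_eq, Finset.coe_sort_coe, Finset.mem_coe,
        Finset.mem_sdiff, mem_hexF]
      push_cast
      constructor
      · intro h; omega
      · rintro ⟨h2, h3⟩; omega
    rw [hset, Set.ncard_coe_finset, Finset.card_sdiff_of_subset hsub, card_hexF, card_hexF]
    have : (m+1+1) * (3*(m+1)+4) = (m+1) * (3*m+4) + (6*m + 10) := by ring
    omega
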